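/- Let the range kernel φ be shiftable: φ(t − s) = ∑_{n=1}^N d_n(s)·φ_n(t) for all s, t. Then the bilateral-filter numerator satisfies, for every x: ∫_{−T}^{T} φ(f(x − y) − f(x))·f(x − y) dy = ∑_{n=1}^N d_n(f(x))·∫_{x−T}^{x+T} φ_n(f(u))·f(u) du. That is, the range-weighted sum equals a linear combination, with data-dependent coefficients d_n(f(x)), of moving sums of the fixed auxiliary images u ↦ φ_n(f(u))·f(u). -/
import Mathlib


theorem bilateral_numerator_moving_sum (T : ℝ) (hT : 0 < T) (N : ℕ)
    (φ : ℝ → ℝ) (φs : Fin N → ℝ → ℝ) (d : ℝ → Fin N → ℝ)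
    (hshift : ∀ s t : ℝ, φ (t - s) = ∑ n, d s n * φs n t)
    (f : ℝ → ℝ) (hf : Measurable f) (hbd : ∃ C : ℝ, ∀ x, |f x| ≤ C)
    (x : ℝ)
    (hint : ∀ n, IntervalIntegrable (fun u => φs n (f u) * f u)
      MeasureTheory.volume (x - T) (x + T)) :
    ∫ y in (-T)..T, φ (f (x - y) - f x) * f (x - y) =
      ∑ n, d (f x) n * ∫ u in (x - T)..(x + T), φs n (f u) * f u := by
  have hint' : ∀ n, IntervalIntegrable (fun y => φs n (f (x - y)) * f (x - y))
      MeasureTheory.volume (-T) T := by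
    intro n
    have := (hint n).comp_sub_left x
    simpa using this.symm
  have key : ∀ n : Fin N, ∫ y in (-T)..T, φs n (f (x - y)) * f (x - y) =
      ∫ u in (x - T)..(x + T), φs n (f u) * f u := by
    intro n
    have := intervalIntegral.integral_comp_sub_left (a := -T) (b := T)
      (fun u => φs n (f u) * f u) x
    simpa [sub_neg_eq_add] using this
  calc ∫ y in (-T)..T, φ (f (x - y) - f x) * f (x - y)
      = ∫ y in (-T)..T, ∑ n, d (f x) n * (φs n (f (x - y)) * f (x - y)) := by
        apply intervalIntegral.integral_congr
        intro y _
        simp [hshift, Finset.sum_mul, mul_assoc]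
    _ = ∑ n, ∫ y in (-T)..T, d (f x) n * (φs n (f (x - y)) * f (x - y)) := by
        apply intervalIntegral.integral_finset_sum
        intro n _
        exact (hint' n).const_mul _
    _ = ∑ n, d (f x) n * ∫ u in (x - T)..(x + T), φs n (f u) * f u := by
        refine Finset.sum_congr rfl fun n _ => ?_
        rw [intervalIntegral.integral_const_mul, key n]
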